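/- Let (X,p) be a TVS-cone metric space over E with cone P, fix e ∈ int P, and let T : X → X and φ : E → E satisfy: φ(P) ⊆ P; φ is increasing on P (if a, b ∈ P and a ≤ b then φ(a) ≤ φ(b)); φ(r·e) ≤ r·φ(e) for every real r ≥ 0; and p(Tx, Ty) ≤ φ(p(x,y)) for all x, y ∈ X. Then d_p(Tx, Ty) ≤ ξ_e(φ(e)) · d_p(x, y) for all x, y ∈ X; in particular, T satisfies d_p(Tx,Ty) ≤ ψ(d_p(x,y)) for the linear, increasing, continuous map ψ(t) = ξ_e(φ(e))·t on [0,∞). -/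

import Mathlib

open Filter Topology

section Defs

variable {E : Type*} [AddCommGroup E] [Module ℝ E] [TopologicalSpace E]

/-- `P` is a closed, pointed convex cone with nonempty interior in the TVS `E`. -/
structure IsTVSCone (P : Set E) : Prop where
  add_mem : ∀ ⦃a⦄, a ∈ P → ∀ ⦃b⦄, b ∈ P → a + b ∈ P
  smul_mem : ∀ (r : ℝ), 0 ≤ r → ∀ ⦃a⦄, a ∈ P → r • a ∈ P
  pointed : ∀ a, a ∈ P → -a ∈ P → a = 0
  isClosed : IsClosed P
  int_nonempty : (interior P).Nonempty

/-- `a ≤ b` with respect to the cone `P`. -/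
def ConeLe (P : Set E) (a b : E) : Prop := b - a ∈ P

/-- `a ≪ b` with respect to the cone `P`. -/
def ConeLt (P : Set E) (a b : E) : Prop := b - a ∈ interior P

/-- `p : X × X → E` is a TVS-cone metric over the cone `P`. -/
structure IsConeMetric (P : Set E) {X : Type*} (p : X → X → E) : Prop where
  nonneg : ∀ x y, ConeLe P 0 (p x y)
  eq_zero_iff : ∀ x y, p x y = 0 ↔ x = y
  symm : ∀ x y, p x y = p y x
  triangle : ∀ x y z, ConeLe P (p x y) (p x z + p z y)

/-- The sequence `x` cone-converges to `a`. -/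
def ConeConverges (P : Set E) {X : Type*} (p : X → X → E) (x : ℕ → X) (a : X) : Prop :=
  ∀ c, c ∈ interior P → ∃ N, ∀ n ≥ N, ConeLt P (p (x n) a) c

/-- The sequence `x` is cone-Cauchy. -/
def ConeCauchy (P : Set E) {X : Type*} (p : X → X → E) (x : ℕ → X) : Prop :=
  ∀ c, c ∈ interior P → ∃ N, ∀ n ≥ N, ∀ m ≥ N, ConeLt P (p (x n) (x m)) c

/-- `(X, p)` is cone-complete. -/
def ConeComplete (P : Set E) {X : Type*} (p : X → X → E) : Prop :=
  ∀ x : ℕ → X, ConeCauchy P p x → ∃ a, ConeConverges P p x a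

/-- The nonlinear scalarization ξ_e(y) = inf {t : t • e - y ∈ P}. -/
noncomputable def xiScal (P : Set E) (e y : E) : ℝ := sInf {t : ℝ | t • e - y ∈ P}

/-- The open ball `B(x, c) = {y : p x y ≪ c}`. -/
def coneBall (P : Set E) {X : Type*} (p : X → X → E) (x : X) (c : E) : Set X :=
  {y | ConeLt P (p x y) c}

/-- The cone metric topology `τ_p`, generated by the balls `B(x,c)`, `c ≫ 0`. -/
def coneTopology (P : Set E) {X : Type*} (p : X → X → E) : TopologicalSpace X :=
  TopologicalSpace.generateFrom {s | ∃ x c, c ∈ interior P ∧ s = coneBall P p x c}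

end Defs

/-- if `p (Tx) (Ty) ≤ φ (p x y)` for an increasing, positively subhomogeneous
`φ : P → P`, then `d_p (Tx) (Ty) ≤ ξ_e (φ e) · d_p x y`. -/
theorem stmt_16 {E X : Type*} [AddCommGroup E] [Module ℝ E] [TopologicalSpace E]
    [IsTopologicalAddGroup E] [ContinuousSMul ℝ E] [T2Space E] [Nonempty X]
    (P : Set E) (hP : IsTVSCone P) (p : X → X → E) (hp : IsConeMetric P p)
    (e : E) (he : e ∈ interior P) (T : X → X) (φ : E → E)
    (hφP : ∀ a ∈ P, φ a ∈ P)
    (hφmono : ∀ a ∈ P, ∀ b ∈ P, ConeLe P a b → ConeLe P (φ a) (φ b))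
    (hφhom : ∀ r : ℝ, 0 ≤ r → ConeLe P (φ (r • e)) (r • φ e))
    (hT : ∀ x y : X, ConeLe P (p (T x) (T y)) (φ (p x y))) :
    ∀ x y : X, xiScal P e (p (T x) (T y)) ≤ xiScal P e (φ e) * xiScal P e (p x y) := by
  intro x y
  have heP : e ∈ P := interior_subset he
  have h0P : (0 : E) ∈ P := by
    obtain ⟨a, ha⟩ := hP.int_nonempty
    simpa using hP.smul_mem 0 le_rfl (interior_subset ha)
  -- nonemptiness of the scalarization sets
  have hne : ∀ z : E, ∃ t : ℝ, t • e - z ∈ P := by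
    intro z
    have hcont : Continuous fun r : ℝ => e - r • z := by
      exact continuous_const.sub (continuous_id.smul continuous_const)
    have h0 : (fun r : ℝ => e - r • z) 0 ∈ interior P := by simpa using he
    have hev : ∀ᶠ r : ℝ in 𝓝 0, e - r • z ∈ interior P :=
      (hcont.tendsto 0).eventually (isOpen_interior.mem_nhds h0)
    have hev' : ∀ᶠ r : ℝ in 𝓝[>] 0, e - r • z ∈ interior P :=
      hev.filter_mono nhdsWithin_le_nhds
    obtain ⟨r, hrmem, hrpos⟩ := (hev'.and self_mem_nhdsWithin).exists
    refine ⟨r⁻¹, ?_⟩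
    have : r⁻¹ • (e - r • z) ∈ P :=
      hP.smul_mem r⁻¹ (le_of_lt (inv_pos.mpr hrpos)) (interior_subset hrmem)
    have hr0 : (r : ℝ) ≠ 0 := ne_of_gt hrpos
    rwa [smul_sub, smul_smul, inv_mul_cancel₀ hr0, one_smul] at this
  by_cases hdeg : -e ∈ P
  · -- degenerate case : the space is trivial
    have he0 : e = 0 := hP.pointed e heP hdeg
    have h0int : (0 : E) ∈ interior P := he0 ▸ he
    have hPuniv : ∀ a : E, a ∈ P := by
      intro a
      have hcont : Continuous fun r : ℝ => r • a := continuous_id.smul continuous_const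
      have h0 : (fun r : ℝ => r • a) 0 ∈ interior P := by simpa using h0int
      have hev : ∀ᶠ r : ℝ in 𝓝 0, r • a ∈ interior P :=
        (hcont.tendsto 0).eventually (isOpen_interior.mem_nhds h0)
      have hev' : ∀ᶠ r : ℝ in 𝓝[>] 0, r • a ∈ interior P :=
        hev.filter_mono nhdsWithin_le_nhds
      obtain ⟨r, hrmem, hrpos⟩ := (hev'.and self_mem_nhdsWithin).exists
      have : r⁻¹ • (r • a) ∈ P :=
        hP.smul_mem r⁻¹ (le_of_lt (inv_pos.mpr hrpos)) (interior_subset hrmem)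
      rwa [inv_smul_smul₀ (ne_of_gt hrpos)] at this
    have hSuniv : ∀ z : E, {t : ℝ | t • e - z ∈ P} = Set.univ := by
      intro z; ext t; simp [hPuniv]
    have hval : ∀ z : E, xiScal P e z = 0 := by
      intro z
      have : ¬ BddBelow ({t : ℝ | t • e - z ∈ P}) := by
        rw [hSuniv z]
        exact fun ⟨b, hb⟩ => absurd (hb (Set.mem_univ (b - 1))) (by linarith)
      simpa [xiScal] using Real.sInf_of_not_bddBelow this
    simp [hval]
  · -- main case
    have hnn : ∀ z ∈ P, ∀ t : ℝ, t • e - z ∈ P → 0 ≤ t := by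
      intro z hz t ht
      by_contra hlt
      push_neg at hlt
      have hte : t • e ∈ P := by
        have := hP.add_mem ht hz
        simpa using this
      have : (-t)⁻¹ • (t • e) ∈ P :=
        hP.smul_mem _ (le_of_lt (inv_pos.mpr (neg_pos.mpr hlt))) hte
      have hne' : -e ∈ P := by
        rw [smul_smul] at this
        have ht0 : t ≠ 0 := ne_of_lt hlt
        have : ((-t)⁻¹ * t) • e ∈ P := this
        rw [show (-t)⁻¹ * t = -1 by field_simp] at this
        simpa using this
      exact hdeg hne'
    have hbdd : ∀ z ∈ P, BddBelow {t : ℝ | t • e - z ∈ P} :=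
      fun z hz => ⟨0, fun t ht => hnn z hz t ht⟩
    have hclosed : ∀ z : E, IsClosed {t : ℝ | t • e - z ∈ P} := by
      intro z
      have hcont : Continuous fun t : ℝ => t • e - z :=
        (continuous_id.smul continuous_const).sub continuous_const
      exact hP.isClosed.preimage hcont
    have hmem : ∀ z ∈ P, (xiScal P e z) • e - z ∈ P := by
      intro z hz
      obtain ⟨t, ht⟩ := hne z
      exact (hclosed z).csInf_mem ⟨t, ht⟩ (hbdd z hz)
    have hge0 : ∀ z ∈ P, 0 ≤ xiScal P e z := by
      intro z hz
      obtain ⟨t, ht⟩ := hne z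
      exact le_csInf ⟨t, ht⟩ fun b hb => hnn z hz b hb
    -- notation
    set d := xiScal P e (p x y) with hd
    set k := xiScal P e (φ e) with hk
    have hpxy : p x y ∈ P := by simpa [ConeLe] using hp.nonneg x y
    have hφe : φ e ∈ P := hφP e heP
    have hd0 : 0 ≤ d := hge0 _ hpxy
    have hk0 : 0 ≤ k := hge0 _ hφe
    have hdm : d • e - p x y ∈ P := hmem _ hpxy
    have hkm : k • e - φ e ∈ P := hmem _ hφe
    have hde : d • e ∈ P := hP.smul_mem d hd0 heP
    have a1 : φ (d • e) - φ (p x y) ∈ P := hφmono _ hpxy _ hde hdm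
    have a2 : d • φ e - φ (d • e) ∈ P := hφhom d hd0
    have a3 : φ (p x y) - p (T x) (T y) ∈ P := hT x y
    have a4 : (d * k) • e - d • φ e ∈ P := by
      have := hP.smul_mem d hd0 hkm
      rwa [smul_sub, smul_smul] at this
    have hsum : (d * k) • e - p (T x) (T y) ∈ P := by
      have h12 := hP.add_mem a4 a2
      have h123 := hP.add_mem h12 a1
      have h1234 := hP.add_mem h123 a3
      have heq : (d * k) • e - d • φ e + (d • φ e - φ (d • e)) + (φ (d • e) - φ (p x y))
          + (φ (p x y) - p (T x) (T y)) = (d * k) • e - p (T x) (T y) := by abel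
      rwa [heq] at h1234
    have hTxy : p (T x) (T y) ∈ P := by simpa [ConeLe] using hp.nonneg (T x) (T y)
    have : xiScal P e (p (T x) (T y)) ≤ d * k :=
      csInf_le (hbdd _ hTxy) hsum
    linarith [this, mul_comm d k]
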